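/- Suppose $X, Y : [0,T] \to \mathbb{R}^{n\times n}$ are continuously differentiable symmetric-matrix-valued functions satisfying the same Riccati differential equation $\dot{M}(t) = A(t)M(t) + M(t)A(t)' - M(t)QM(t)$, where $Q$ is symmetric positive semidefinite and $t \mapsto A(t)$ is continuous, with $X(0) \leq Y(0)$ in the Loewner order. Then $X(t) \leq Y(t)$ for all $t \in [0,T]$ (order-preserving / comparison property of the Riccati flow). -/

import Mathlib

open scoped Matrix Matrix.Norms.L2Operator

set_option maxHeartbeats 1000000

section RiccatiAux

variable {n : ℕ}

/-- The quadratic form `M ↦ v ⬝ᵥ (M *ᵥ v)` as a continuous linear map. -/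
noncomputable def quadCLM (v : Fin n → ℝ) : Matrix (Fin n) (Fin n) ℝ →L[ℝ] ℝ :=
  LinearMap.toContinuousLinearMap
    { toFun := fun M => v ⬝ᵥ (M *ᵥ v)
      map_add' := fun M N => by simp [Matrix.add_mulVec, dotProduct_add]
      map_smul' := fun c M => by
        simp [Matrix.smul_mulVec, dotProduct_smul, smul_eq_mul] }

@[simp] lemma quadCLM_apply (v : Fin n → ℝ) (M : Matrix (Fin n) (Fin n) ℝ) :
    quadCLM v M = v ⬝ᵥ (M *ᵥ v) := rfl

lemma hasDerivAt_quad {f : ℝ → Matrix (Fin n) (Fin n) ℝ} {f' : Matrix (Fin n) (Fin n) ℝ} {t : ℝ}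
    (hf : HasDerivAt f f' t) (v : Fin n → ℝ) :
    HasDerivAt (fun s => v ⬝ᵥ (f s *ᵥ v)) (v ⬝ᵥ (f' *ᵥ v)) t :=
  (quadCLM v).hasFDerivAt.comp_hasDerivAt t hf

/-- Matrix entry as a continuous linear map. -/
noncomputable def entryCLM (i j : Fin n) : Matrix (Fin n) (Fin n) ℝ →L[ℝ] ℝ :=
  LinearMap.toContinuousLinearMap
    { toFun := fun M => M i j
      map_add' := fun _ _ => rfl
      map_smul' := fun _ _ => rfl }

/-- Matrix transpose as a continuous linear map. -/
noncomputable def transposeCLM : Matrix (Fin n) (Fin n) ℝ →L[ℝ] Matrix (Fin n) (Fin n) ℝ :=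
  LinearMap.toContinuousLinearMap
    { toFun := fun M => Mᵀ
      map_add' := fun M N => Matrix.transpose_add M N
      map_smul' := fun c M => Matrix.transpose_smul c M }

lemma quad_pair_continuous :
    Continuous fun q : Matrix (Fin n) (Fin n) ℝ × EuclideanSpace ℝ (Fin n) =>
      (q.2 : Fin n → ℝ) ⬝ᵥ (q.1 *ᵥ (q.2 : Fin n → ℝ)) := by
  simp only [dotProduct, Matrix.mulVec]
  apply continuous_finset_sum
  intro i _
  apply Continuous.mul
  · exact (continuous_apply i).comp
      ((EuclideanSpace.equiv (Fin n) ℝ).continuous.comp continuous_snd)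
  · apply continuous_finset_sum
    intro j _
    exact ((entryCLM i j).continuous.comp continuous_fst).mul
      ((continuous_apply j).comp
        ((EuclideanSpace.equiv (Fin n) ℝ).continuous.comp continuous_snd))

lemma dot_self_eq_one (v : EuclideanSpace ℝ (Fin n)) (hv : ‖v‖ = 1) :
    (v : Fin n → ℝ) ⬝ᵥ (v : Fin n → ℝ) = 1 := by
  have h := real_inner_self_eq_norm_sq v
  rw [hv] at h
  simpa only [dotProduct, PiLp.inner_apply, RCLike.inner_apply, conj_trivial, one_pow] using h

lemma quad_le_opNorm (M : Matrix (Fin n) (Fin n) ℝ) (v : EuclideanSpace ℝ (Fin n))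
    (hv : ‖v‖ = 1) : (v : Fin n → ℝ) ⬝ᵥ (M *ᵥ (v : Fin n → ℝ)) ≤ ‖M‖ := by
  have h1 : (v : Fin n → ℝ) ⬝ᵥ (M *ᵥ (v : Fin n → ℝ))
      = (inner ℝ v ((EuclideanSpace.equiv (Fin n) ℝ).symm (M *ᵥ (v : Fin n → ℝ))) : ℝ) := by
    simp [dotProduct, PiLp.inner_apply, RCLike.inner_apply, conj_trivial, mul_comm]
  rw [h1]
  calc (inner ℝ v ((EuclideanSpace.equiv (Fin n) ℝ).symm (M *ᵥ (v : Fin n → ℝ))) : ℝ)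
      ≤ ‖v‖ * ‖(EuclideanSpace.equiv (Fin n) ℝ).symm (M *ᵥ (v : Fin n → ℝ))‖ :=
        real_inner_le_norm _ _
    _ ≤ ‖v‖ * (‖M‖ * ‖v‖) := by
        apply mul_le_mul_of_nonneg_left _ (norm_nonneg _)
        exact M.l2_opNorm_mulVec _
    _ = ‖M‖ := by rw [hv]; ring

lemma exists_unit_vec (w : Fin n → ℝ) (hw : w ≠ 0) :
    ∃ (v : EuclideanSpace ℝ (Fin n)) (a : ℝ), 0 < a ∧ ‖v‖ = 1 ∧
      ∀ M : Matrix (Fin n) (Fin n) ℝ,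
        (v : Fin n → ℝ) ⬝ᵥ (M *ᵥ (v : Fin n → ℝ)) = a * (a * (w ⬝ᵥ (M *ᵥ w))) := by
  set W : EuclideanSpace ℝ (Fin n) := (EuclideanSpace.equiv (Fin n) ℝ).symm w with hW
  have hWne : W ≠ 0 := by
    intro h
    apply hw
    have := congrArg (EuclideanSpace.equiv (Fin n) ℝ) h
    simpa [hW] using this
  have hnpos : 0 < ‖W‖ := norm_pos_iff.2 hWne
  refine ⟨‖W‖⁻¹ • W, ‖W‖⁻¹, inv_pos.2 hnpos, ?_, ?_⟩
  · rw [norm_smul, norm_inv, norm_norm, inv_mul_cancel₀ (ne_of_gt hnpos)]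
  · intro M
    show ((‖W‖⁻¹ • w : Fin n → ℝ)) ⬝ᵥ (M *ᵥ (‖W‖⁻¹ • w : Fin n → ℝ)) = _
    rw [smul_dotProduct, Matrix.mulVec_smul, dotProduct_smul]
    simp [smul_eq_mul, mul_assoc]

end RiccatiAux

theorem stmt_15 {n : ℕ} (T : ℝ) (hT : 0 ≤ T)
    (A : ℝ → Matrix (Fin n) (Fin n) ℝ) (hA : ContinuousOn A (Set.Icc 0 T))
    (Q : Matrix (Fin n) (Fin n) ℝ) (hQ : Q.PosSemidef)
    (X Y : ℝ → Matrix (Fin n) (Fin n) ℝ)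
    (hXsymm : ∀ t ∈ Set.Icc (0 : ℝ) T, (X t).IsSymm)
    (hYsymm : ∀ t ∈ Set.Icc (0 : ℝ) T, (Y t).IsSymm)
    (hX : ∀ t ∈ Set.Icc (0 : ℝ) T,
      HasDerivAt X (A t * X t + X t * (A t)ᵀ - X t * Q * X t) t)
    (hY : ∀ t ∈ Set.Icc (0 : ℝ) T,
      HasDerivAt Y (A t * Y t + Y t * (A t)ᵀ - Y t * Q * Y t) t)
    (hXcont : ContinuousOn (fun t => A t * X t + X t * (A t)ᵀ - X t * Q * X t) (Set.Icc 0 T))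
    (hYcont : ContinuousOn (fun t => A t * Y t + Y t * (A t)ᵀ - Y t * Q * Y t) (Set.Icc 0 T))
    (h0 : (Y 0 - X 0).PosSemidef) :
    ∀ t ∈ Set.Icc (0 : ℝ) T, (Y t - X t).PosSemidef := by
  have hXc : ContinuousOn X (Set.Icc 0 T) :=
    fun t ht => (hX t ht).continuousAt.continuousWithinAt
  have hYc : ContinuousOn Y (Set.Icc 0 T) :=
    fun t ht => (hY t ht).continuousAt.continuousWithinAt
  have hDsymm : ∀ t ∈ Set.Icc (0 : ℝ) T, (Y t - X t).IsSymm :=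
    fun t ht => (hYsymm t ht).sub (hXsymm t ht)
  -- derivative of the difference, in Lyapunov form
  have hD : ∀ t ∈ Set.Icc (0 : ℝ) T, HasDerivAt (fun s => Y s - X s)
      ((A t - Y t * Q) * (Y t - X t) + (Y t - X t) * ((A t)ᵀ - Q * X t)) t := by
    intro t ht
    have h := (hY t ht).sub (hX t ht)
    have e : A t * Y t + Y t * (A t)ᵀ - Y t * Q * Y t - (A t * X t + X t * (A t)ᵀ - X t * Q * X t)
        = (A t - Y t * Q) * (Y t - X t) + (Y t - X t) * ((A t)ᵀ - Q * X t) := by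
      noncomm_ring
    rw [← e]
    exact h
  -- a bound for the coefficient matrices
  have hB₁c : ContinuousOn (fun t => A t - Y t * Q) (Set.Icc 0 T) :=
    hA.sub (hYc.mul continuousOn_const)
  have hB₂c : ContinuousOn (fun t => (A t)ᵀ - Q * X t) (Set.Icc 0 T) := by
    have h1 : ContinuousOn (fun t => (A t)ᵀ) (Set.Icc 0 T) :=
      (transposeCLM.continuous.comp_continuousOn hA)
    exact h1.sub (continuousOn_const.mul hXc)
  obtain ⟨K, hK⟩ := (isCompact_Icc (a := (0:ℝ)) (b := T)).exists_bound_of_continuousOn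
    (hB₁c.norm.add hB₂c.norm)
  set c := K + 1 with hcdef
  have hc : ∀ t ∈ Set.Icc (0 : ℝ) T, ‖A t - Y t * Q‖ + ‖(A t)ᵀ - Q * X t‖ + 1 ≤ c := by
    intro t ht
    have := hK t ht
    rw [Real.norm_eq_abs] at this
    have h2 := (le_abs_self _).trans this
    simp only [Pi.add_apply] at h2
    simp only [hcdef]
    linarith
  -- the key perturbed positivity statement
  have key : ∀ ε : ℝ, 0 < ε → ∀ t ∈ Set.Icc (0 : ℝ) T, ∀ v : EuclideanSpace ℝ (Fin n),
      ‖v‖ = 1 →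
      0 < (v : Fin n → ℝ) ⬝ᵥ ((Y t - X t + (ε * Real.exp (c * t)) • 1) *ᵥ (v : Fin n → ℝ)) := by
    intro ε hε
    by_contra hbad
    push_neg at hbad
    obtain ⟨t₂, ht₂, v₂, hv₂, hq₂⟩ := hbad
    set E : ℝ → Matrix (Fin n) (Fin n) ℝ :=
      fun s => Y s - X s + (ε * Real.exp (c * s)) • 1 with hEdef
    have hE : ∀ t ∈ Set.Icc (0 : ℝ) T, HasDerivAt E
        ((A t - Y t * Q) * (Y t - X t) + (Y t - X t) * ((A t)ᵀ - Q * X t)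
          + (ε * c * Real.exp (c * t)) • 1) t := by
      intro t ht
      have h1 : HasDerivAt (fun s : ℝ => c * s) c t := by
        simpa using (hasDerivAt_id t).const_mul c
      have h2 := (h1.exp.const_mul ε).smul_const (1 : Matrix (Fin n) (Fin n) ℝ)
      have h3 := (hD t ht).add h2
      convert h3 using 2
      · rfl
      · rfl
      · rfl
      · rfl
      · ring
    have hEcont : ContinuousOn E (Set.Icc 0 T) :=
      fun t ht => (hE t ht).continuousAt.continuousWithinAt
    set S := {t | t ∈ Set.Icc (0:ℝ) T ∧ ∃ v : EuclideanSpace ℝ (Fin n), ‖v‖ = 1 ∧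
      (v : Fin n → ℝ) ⬝ᵥ (E t *ᵥ (v : Fin n → ℝ)) ≤ 0} with hSdef
    have hSne : S.Nonempty := ⟨t₂, ht₂, v₂, hv₂, hq₂⟩
    -- S is compact
    have hScpt : IsCompact S := by
      set sph : Set (EuclideanSpace ℝ (Fin n)) := Metric.sphere 0 1 with hsph
      have hFc : ContinuousOn (fun p : ℝ × EuclideanSpace ℝ (Fin n) =>
          (p.2 : Fin n → ℝ) ⬝ᵥ (E p.1 *ᵥ (p.2 : Fin n → ℝ)))
          (Set.Icc 0 T ×ˢ sph) :=
        quad_pair_continuous.comp_continuousOn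
          (f := fun p : ℝ × EuclideanSpace ℝ (Fin n) => (E p.1, p.2))
          ((hEcont.comp continuousOn_fst (fun p hp => hp.1)).prodMk continuous_snd.continuousOn)
      have hK'closed : IsClosed ((Set.Icc 0 T ×ˢ sph) ∩
          (fun p : ℝ × EuclideanSpace ℝ (Fin n) =>
            (p.2 : Fin n → ℝ) ⬝ᵥ (E p.1 *ᵥ (p.2 : Fin n → ℝ))) ⁻¹' Set.Iic 0) :=
        hFc.preimage_isClosed_of_isClosed (isClosed_Icc.prod Metric.isClosed_sphere) isClosed_Iic
      have hK'cpt : IsCompact ((Set.Icc 0 T ×ˢ sph) ∩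
          (fun p : ℝ × EuclideanSpace ℝ (Fin n) =>
            (p.2 : Fin n → ℝ) ⬝ᵥ (E p.1 *ᵥ (p.2 : Fin n → ℝ))) ⁻¹' Set.Iic 0) :=
        IsCompact.of_isClosed_subset ((isCompact_Icc).prod (isCompact_sphere 0 1)) hK'closed
          Set.inter_subset_left
      have himg := hK'cpt.image continuous_fst
      convert himg using 1
      ext t
      simp only [hSdef, Set.mem_image, Set.mem_inter_iff, Set.mem_prod, Set.mem_preimage,
        Set.mem_setOf_eq, Set.mem_Iic, hsph, Metric.mem_sphere, dist_zero_right]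
      constructor
      · rintro ⟨ht, v, hv1, hvq⟩
        exact ⟨(t, v), ⟨⟨ht, hv1⟩, hvq⟩, rfl⟩
      · rintro ⟨⟨t', v⟩, ⟨⟨ht, hv1⟩, hvq⟩, rfl⟩
        exact ⟨ht, v, hv1, hvq⟩
    set t₁ := sInf S with ht₁def
    have ht₁S : t₁ ∈ S := hScpt.sInf_mem hSne
    obtain ⟨ht₁I, v, hv1, hvq⟩ := ht₁S
    set vv : Fin n → ℝ := (v : Fin n → ℝ) with hvvdef
    have hvq' : vv ⬝ᵥ (E t₁ *ᵥ vv) ≤ 0 := hvq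
    have hnotS : ∀ t, t < t₁ → t ∉ S :=
      fun t hlt hts => absurd (csInf_le hScpt.bddBelow hts) (not_le.2 hlt)
    have hgoodU : ∀ t ∈ Set.Icc (0:ℝ) T, t < t₁ → ∀ w : EuclideanSpace ℝ (Fin n), ‖w‖ = 1 →
        0 < (w : Fin n → ℝ) ⬝ᵥ (E t *ᵥ (w : Fin n → ℝ)) := by
      intro t ht hlt w hw
      by_contra h
      exact hnotS t hlt ⟨ht, w, hw, le_of_not_gt h⟩
    have hgood : ∀ t ∈ Set.Icc (0:ℝ) T, t < t₁ → ∀ w : Fin n → ℝ,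
        0 ≤ w ⬝ᵥ (E t *ᵥ w) := by
      intro t ht hlt w
      rcases eq_or_ne w 0 with rfl | hw
      · simp
      · obtain ⟨u, a, ha, hu1, hua⟩ := exists_unit_vec w hw
        have h := hgoodU t ht hlt u hu1
        rw [hua (E t)] at h
        nlinarith [mul_pos ha ha]
    -- 0 is not in S
    have h0S : (0:ℝ) ∉ S := by
      rintro ⟨_, w, hw1, hwq⟩
      have h1 : 0 ≤ (w : Fin n → ℝ) ⬝ᵥ ((Y 0 - X 0) *ᵥ (w : Fin n → ℝ)) := by
        simpa using h0.dotProduct_mulVec_nonneg (w : Fin n → ℝ)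
      have h2 : (w : Fin n → ℝ) ⬝ᵥ (E 0 *ᵥ (w : Fin n → ℝ))
          = (w : Fin n → ℝ) ⬝ᵥ ((Y 0 - X 0) *ᵥ (w : Fin n → ℝ)) + ε := by
        simp [hEdef, Matrix.add_mulVec, dotProduct_add, Matrix.smul_mulVec,
          Matrix.one_mulVec, dotProduct_smul, smul_eq_mul, dot_self_eq_one w hw1,
          Real.exp_zero]
      rw [h2] at hwq
      linarith
    have ht₁pos : 0 < t₁ := by
      rcases lt_or_eq_of_le ht₁I.1 with h | h
      · exact h
      · exact absurd (h ▸ (⟨ht₁I, v, hv1, hvq⟩ : t₁ ∈ S)) h0S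
    -- E t₁ is positive semidefinite (limit from the left)
    have hEt₁herm : (E t₁).IsHermitian := by
      show _ᴴ = _
      rw [Matrix.conjTranspose_eq_transpose_of_trivial]
      show (Y t₁ - X t₁ + (ε * Real.exp (c * t₁)) • 1)ᵀ = _
      rw [Matrix.transpose_add, (hDsymm t₁ ht₁I).eq, Matrix.transpose_smul, Matrix.transpose_one]
    have hEt₁psd : (E t₁).PosSemidef := by
      refine Matrix.PosSemidef.of_dotProduct_mulVec_nonneg hEt₁herm fun w => ?_
      rw [star_trivial]
      have hcw : Filter.Tendsto (fun t => w ⬝ᵥ (E t *ᵥ w)) (nhdsWithin t₁ (Set.Iio t₁))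
          (nhds (w ⬝ᵥ (E t₁ *ᵥ w))) :=
        ((hasDerivAt_quad (hE t₁ ht₁I) w).continuousAt.tendsto).mono_left nhdsWithin_le_nhds
      refine ge_of_tendsto hcw ?_
      filter_upwards [Ioo_mem_nhdsLT_of_mem (Set.mem_Ioc.2 ⟨ht₁pos, le_refl t₁⟩)] with t htm
      exact hgood t ⟨le_of_lt htm.1, le_trans (le_of_lt htm.2) ht₁I.2⟩ htm.2 w
    have hq0 : vv ⬝ᵥ (E t₁ *ᵥ vv) = 0 :=
      le_antisymm hvq' (by simpa using hEt₁psd.dotProduct_mulVec_nonneg vv)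
    have hker : E t₁ *ᵥ vv = 0 :=
      (hEt₁psd.dotProduct_mulVec_zero_iff vv).1 (by simpa using hq0)
    set s := ε * Real.exp (c * t₁) with hsdef
    have hspos : 0 < s := mul_pos hε (Real.exp_pos _)
    have hDv : (Y t₁ - X t₁) *ᵥ vv = (-s) • vv := by
      have h2 : E t₁ *ᵥ vv = (Y t₁ - X t₁) *ᵥ vv + s • vv := by
        simp [hEdef, Matrix.add_mulVec, Matrix.smul_mulVec, Matrix.one_mulVec, hsdef]
      rw [hker] at h2
      have h3 := eq_neg_of_add_eq_zero_left h2.symm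
      rw [h3, neg_smul]
    -- value of the derivative of the quadratic form at t₁
    set b₁ := vv ⬝ᵥ ((A t₁ - Y t₁ * Q) *ᵥ vv) with hb₁def
    set b₂ := vv ⬝ᵥ (((A t₁)ᵀ - Q * X t₁) *ᵥ vv) with hb₂def
    have hp1 : vv ⬝ᵥ (((A t₁ - Y t₁ * Q) * (Y t₁ - X t₁)) *ᵥ vv) = -s * b₁ := by
      rw [← Matrix.mulVec_mulVec, hDv, Matrix.mulVec_smul, dotProduct_smul, smul_eq_mul,
        hb₁def]
    have hp2 : vv ⬝ᵥ (((Y t₁ - X t₁) * ((A t₁)ᵀ - Q * X t₁)) *ᵥ vv) = -s * b₂ := by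
      rw [← Matrix.mulVec_mulVec, Matrix.dotProduct_mulVec]
      have hvm : vv ᵥ* (Y t₁ - X t₁) = (-s) • vv := by
        have h := Matrix.vecMul_transpose (Y t₁ - X t₁) vv
        rw [(hDsymm t₁ ht₁I).eq] at h
        rw [h, hDv]
      rw [hvm, smul_dotProduct, smul_eq_mul, hb₂def]
    have hvself : vv ⬝ᵥ vv = 1 := dot_self_eq_one v hv1
    have hp3 : vv ⬝ᵥ
        (((ε * c * Real.exp (c * t₁)) • (1 : Matrix (Fin n) (Fin n) ℝ)) *ᵥ vv)
        = s * c := by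
      rw [Matrix.smul_mulVec, Matrix.one_mulVec, dotProduct_smul, smul_eq_mul,
        hvself, hsdef]
      ring
    have hgd := hasDerivAt_quad (hE t₁ ht₁I) vv
    have hval : vv ⬝ᵥ
        (((A t₁ - Y t₁ * Q) * (Y t₁ - X t₁) + (Y t₁ - X t₁) * ((A t₁)ᵀ - Q * X t₁)
          + (ε * c * Real.exp (c * t₁)) • 1) *ᵥ vv)
        = -s * b₁ + (-s * b₂) + s * c := by
      rw [Matrix.add_mulVec, Matrix.add_mulVec, dotProduct_add, dotProduct_add,
        hp1, hp2, hp3]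
    rw [hval] at hgd
    -- the derivative is strictly positive
    have hb : b₁ + b₂ ≤ c - 1 := by
      have h1 : b₁ ≤ ‖A t₁ - Y t₁ * Q‖ := quad_le_opNorm (A t₁ - Y t₁ * Q) v hv1
      have h2 : b₂ ≤ ‖(A t₁)ᵀ - Q * X t₁‖ := quad_le_opNorm ((A t₁)ᵀ - Q * X t₁) v hv1
      have h3 := hc t₁ ht₁I
      linarith
    have hgpos : 0 < -s * b₁ + (-s * b₂) + s * c := by nlinarith
    -- but the left slope is nonpositive: contradiction
    have hineq : -s * b₁ + (-s * b₂) + s * c ≤ 0 := by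
      have hs' : Filter.Tendsto (slope (fun t => vv ⬝ᵥ (E t *ᵥ vv)) t₁)
          (nhdsWithin t₁ (Set.Iio t₁)) (nhds (-s * b₁ + (-s * b₂) + s * c)) := by
        have h := hgd.hasDerivWithinAt (s := Set.Iio t₁)
        rw [hasDerivWithinAt_iff_tendsto_slope] at h
        simpa [Set.diff_singleton_eq_self (fun hcc => lt_irrefl t₁ hcc)] using h
      refine le_of_tendsto hs' ?_
      filter_upwards [Ioo_mem_nhdsLT_of_mem (Set.mem_Ioc.2 ⟨ht₁pos, le_refl t₁⟩)] with t htm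
      rw [slope_def_field]
      have hgt : 0 < vv ⬝ᵥ (E t *ᵥ vv) :=
        hgoodU t ⟨le_of_lt htm.1, le_trans (le_of_lt htm.2) ht₁I.2⟩ htm.2 v hv1
      have hts : t - t₁ < 0 := sub_neg.2 htm.2
      rw [div_nonpos_iff]
      left
      constructor
      · rw [hq0]; linarith
      · linarith
    linarith
  -- conclude positive semidefiniteness by letting ε → 0
  intro t ht
  refine Matrix.PosSemidef.of_dotProduct_mulVec_nonneg ?_ fun w => ?_
  · show _ᴴ = _
    rw [Matrix.conjTranspose_eq_transpose_of_trivial]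
    exact (hDsymm t ht).eq
  · rw [star_trivial]
    rcases eq_or_ne w 0 with rfl | hw
    · simp
    obtain ⟨u, a, ha, hu1, hua⟩ := exists_unit_vec w hw
    have hq : 0 ≤ (u : Fin n → ℝ) ⬝ᵥ ((Y t - X t) *ᵥ (u : Fin n → ℝ)) := by
      by_contra hneg
      push_neg at hneg
      set q := (u : Fin n → ℝ) ⬝ᵥ ((Y t - X t) *ᵥ (u : Fin n → ℝ)) with hqdef
      have hεpos : 0 < -q / Real.exp (c * t) := div_pos (neg_pos.2 hneg) (Real.exp_pos _)
      have hkey := key _ hεpos t ht u hu1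
      rw [Matrix.add_mulVec, dotProduct_add, Matrix.smul_mulVec,
        Matrix.one_mulVec, dotProduct_smul, smul_eq_mul, dot_self_eq_one u hu1,
        mul_one, div_mul_cancel₀ _ (Real.exp_ne_zero (c * t))] at hkey
      rw [← hqdef] at hkey
      linarith
    rw [hua (Y t - X t)] at hq
    nlinarith [mul_pos ha ha]
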